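/- Let L, N be positive integers, x : Fin L → {0,1} with the support of x equal to a set of R consecutive indices (circularly). Let α̃ be the pseudo-periodic assignment of total weight N as above (α̃(i) ∈ {κ1, κ1+1} with κ1+1 at positions ⌊dk⌋, d = L/κ2, κ2 = N mod L). Then max_s Σ_i x(i)·α̃^{↺s}(i) ≤ (N/L)·R + 1, i.e., the maximal X-count of the rounded assignment exceeds that of the average assignment by at most 1. -/

import Mathlib

/-- The `X`-count at shift `s`: `⟨C, α^{↺s}⟩^X = Σ_{i < L} x i * α ((i - s) mod L)`. -/
noncomputable def xcount (L : ℕ) (x α : ℕ → ℝ) (s : ℕ) : ℝ :=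
  ∑ i ∈ Finset.range L, x i * α ((i + (L - s % L)) % L)

open Classical in
/-- Pseudo-periodic assignment of total weight `N` on a cycle of length `L`:
with `κ1 = ⌊N/L⌋`, `κ2 = N mod L`, `d = L/κ2`, positions `⌊d·k⌋` (`k < κ2`)
receive `κ1 + 1` units and all other positions receive `κ1` units. -/
noncomputable def atilde (L N : ℕ) (i : ℕ) : ℝ :=
  if ∃ k < N % L, i = Nat.floor ((L : ℝ) / (N % L : ℕ) * k)
  then ((N / L : ℕ) : ℝ) + 1 else ((N / L : ℕ) : ℝ)

open Finset
lemma window_bound (L N R a : ℕ) (hL : 0 < L) (hRL : R ≤ L) (ha : a < L) :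
    ∑ j ∈ range R, atilde L N ((a + j) % L) ≤ (N : ℝ) / L * R + 1 := by
  classical
  set κ1 := N / L with hκ1
  set κ2 := N % L with hκ2
  have hL0 : (L : ℝ) ≠ 0 := Nat.cast_ne_zero.mpr hL.ne'
  have hNeq : (N : ℝ) = L * κ1 + κ2 := by
    have h := Nat.div_add_mod N L
    have h2 : ((L : ℝ) * (N / L : ℕ) + (N % L : ℕ)) = (N : ℝ) := by exact_mod_cast h
    rw [← hκ1, ← hκ2] at h2
    linarith
  by_cases hk : κ2 = 0
  · have hα : ∀ m, atilde L N m = (κ1 : ℝ) := by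
      intro m
      rw [atilde, if_neg]
      push_neg
      intro k hk2
      omega
    simp only [hα]
    rw [Finset.sum_const, card_range, nsmul_eq_mul]
    have hN2 : (N : ℝ) = L * κ1 := by
      rw [hNeq]
      have : ((κ2 : ℕ) : ℝ) = 0 := by rw [hk]; norm_num
      rw [this]; ring
    have : (N : ℝ) / L = κ1 := by rw [hN2]; field_simp
    rw [this]
    linarith [mul_comm (R:ℝ) (κ1:ℝ)]
  · -- main case
    have hκ2pos : 0 < κ2 := Nat.pos_of_ne_zero hk
    have hκ2R : (0:ℝ) < κ2 := by exact_mod_cast hκ2pos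
    set d : ℝ := (L : ℝ) / κ2 with hd
    have hd0 : 0 < d := div_pos (by exact_mod_cast hL) hκ2R
    have hκ2L : κ2 < L := by rw [hκ2]; exact Nat.mod_lt N hL
    have hd1 : 1 ≤ d := by
      have : (κ2:ℝ) ≤ L := by exact_mod_cast hκ2L.le
      rw [hd, le_div_iff₀ hκ2R]; linarith
    have hdκ : d * κ2 = L := by rw [hd]; field_simp
    set M : ℕ → ℕ := fun k => Nat.floor (d * k) with hM
    have hMmono : StrictMono M := by
      apply strictMono_nat_of_lt_succ
      intro k
      show Nat.floor (d * (k:ℕ)) < Nat.floor (d * ((k+1 : ℕ):ℝ))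
      have hc : ((k+1 : ℕ):ℝ) = (k:ℝ) + 1 := by push_cast; ring
      rw [hc]
      have h2 : Nat.floor (d * (k:ℝ)) + 1 = Nat.floor (d * (k:ℝ) + 1) :=
        (Nat.floor_add_one (by positivity)).symm
      have h3 : Nat.floor (d * (k:ℝ) + 1) ≤ Nat.floor (d * ((k:ℝ)+1)) :=
        Nat.floor_le_floor (by nlinarith)
      omega
    have hMlt : ∀ k < κ2, M k < L := by
      intro k hkk
      rw [hM]
      simp only
      rw [Nat.floor_lt (by positivity)]
      calc d * k < d * κ2 := by
            apply mul_lt_mul_of_pos_left _ hd0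
            exact_mod_cast hkk
        _ = L := hdκ
    set T : Finset ℕ := (range κ2).image M with hT
    have hα : ∀ m, atilde L N m = (κ1 : ℝ) + (if m ∈ T then 1 else 0) := by
      intro m
      have hiff : (∃ k < N % L, m = Nat.floor ((L : ℝ) / (N % L : ℕ) * k)) ↔ m ∈ T := by
        rw [hT]
        simp only [Finset.mem_image, Finset.mem_range, hM, ← hκ2]
        constructor
        · rintro ⟨k, hk1, hk2⟩; exact ⟨k, hk1, hk2.symm⟩
        · rintro ⟨k, hk1, hk2⟩; exact ⟨k, hk1, hk2.symm⟩
      rw [atilde, ← hκ1]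
      split_ifs with h1 h2
      · rfl
      · exact absurd (hiff.mp h1) h2
      · exact absurd (hiff.mpr (by assumption)) h1
      · simp
    simp only [hα]
    rw [Finset.sum_add_distrib, Finset.sum_const, card_range, nsmul_eq_mul, Finset.sum_boole]
    -- now bound the cardinality
    set A : Finset ℕ := (range R).filter (fun j => (a + j) % L ∈ T) with hA
    set W : Finset ℕ := (range R).image (fun j => (a + j) % L) with hW
    set B : Finset ℕ := (range κ2).filter (fun k => M k ∈ W) with hB
    have hginj : Set.InjOn (fun j => (a + j) % L) (range R) := by
      intro j hj j' hj' h
      simp only [Finset.coe_range, Set.mem_Iio] at hj hj'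
      have : j ≡ j' [MOD L] := Nat.ModEq.add_left_cancel' a h
      exact this.eq_of_lt_of_lt (lt_of_lt_of_le hj hRL) (lt_of_lt_of_le hj' hRL)
    have hMinj : Set.InjOn M (range κ2) := fun _ _ _ _ h => hMmono.injective h
    have hcard : A.card = B.card := by
      have h1 : A.image (fun j => (a + j) % L) = W ∩ T := by
        rw [hA, hW, ← Finset.filter_mem_eq_inter, Finset.filter_image]
      have h2 : B.image M = T ∩ W := by
        rw [hB, hT, ← Finset.filter_mem_eq_inter, Finset.filter_image]
      have c1 : A.card = (W ∩ T).card := by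
        rw [← h1]
        exact (Finset.card_image_of_injOn (hginj.mono (by rw [hA]; exact fun z hz => Finset.mem_coe.mpr (Finset.filter_subset _ _ hz)))).symm
      have c2 : B.card = (T ∩ W).card := by
        rw [← h2]
        exact (Finset.card_image_of_injOn (hMinj.mono (by rw [hB]; exact fun z hz => Finset.mem_coe.mpr (Finset.filter_subset _ _ hz)))).symm
      rw [c1, c2, Finset.inter_comm]
    -- bound card B
    set B1 : Finset ℕ := (range κ2).filter (fun k => a ≤ M k ∧ M k < a + R) with hB1
    set B2 : Finset ℕ := (range κ2).filter (fun k => M k + L < a + R) with hB2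
    have hBsub : B ⊆ B1 ∪ B2 := by
      intro k hkB
      rw [hB, Finset.mem_filter, Finset.mem_range] at hkB
      obtain ⟨hk1, hk2⟩ := hkB
      rw [hW, Finset.mem_image] at hk2
      obtain ⟨j, hj, hjeq⟩ := hk2
      rw [Finset.mem_range] at hj
      have hmlt : M k < L := hMlt k hk1
      have key : (a ≤ M k ∧ M k < a + R) ∨ (M k + L < a + R) := by
        by_cases hc : a + j < L
        · rw [Nat.mod_eq_of_lt hc] at hjeq; omega
        · have h2 : (a+j) % L = (a+j) - L := by
            rw [Nat.mod_eq_sub_mod (by omega), Nat.mod_eq_of_lt (by omega)]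
          rw [h2] at hjeq; omega
      rcases key with h | h
      · exact Finset.mem_union_left _ (by rw [hB1]; simp only [Finset.mem_filter, Finset.mem_range]; exact ⟨hk1, h⟩)
      · exact Finset.mem_union_right _ (by rw [hB2]; simp only [Finset.mem_filter, Finset.mem_range]; exact ⟨hk1, h⟩)
    have hcardB : (B.card : ℝ) ≤ (R : ℝ) * κ2 / L + 1 := by
      have hRd : (R : ℝ) / d = (R : ℝ) * κ2 / L := by
        rw [hd]; field_simp
      have hB1bound : ∀ k ∈ B1, ((a:ℝ)/d ≤ k ∧ (k:ℝ) < ((a:ℝ)+R)/d) := by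
        intro k hkk
        rw [hB1, Finset.mem_filter] at hkk
        obtain ⟨-, h1, h2⟩ := hkk
        constructor
        · rw [div_le_iff₀ hd0]
          have : (a : ℝ) ≤ d * k := (Nat.le_floor_iff (by positivity)).mp h1
          linarith
        · rw [lt_div_iff₀ hd0]
          have : d * k < (a:ℝ) + R := by
            have := (Nat.floor_lt (by positivity)).mp (show M k < a + R from h2)
            push_cast at this ⊢; linarith
          linarith
      by_cases hcase : a + R ≤ L
      · -- no wrap: B2 empty
        have hB2e : B2 = ∅ := by
          rw [hB2, Finset.filter_eq_empty_iff]
          intro k hkk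
          rw [Finset.mem_range] at hkk
          have := hMlt k hkk
          omega
        have hsub : B ⊆ B1 := by
          intro k hkk
          have := hBsub hkk
          rw [hB2e, Finset.union_empty] at this
          exact this
        set m0 := Nat.ceil ((a:ℝ)/d) with hm0
        set m1 := Nat.ceil (((a:ℝ)+R)/d) with hm1
        have hsub2 : B1 ⊆ Finset.Ico m0 m1 := by
          intro k hkk
          obtain ⟨h1, h2⟩ := hB1bound k hkk
          rw [Finset.mem_Ico]
          constructor
          · rw [hm0, Nat.ceil_le]; exact h1
          · have : (k : ℝ) < m1 := lt_of_lt_of_le h2 (Nat.le_ceil _)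
            exact_mod_cast this
        have hm01 : m0 ≤ m1 := by
          apply Nat.ceil_le_ceil
          have hRnn : (0:ℝ) ≤ (R:ℕ) := Nat.cast_nonneg R
          gcongr
          linarith
        have hcc : B.card ≤ m1 - m0 := by
          calc B.card ≤ B1.card := Finset.card_le_card hsub
            _ ≤ (Finset.Ico m0 m1).card := Finset.card_le_card hsub2
            _ = m1 - m0 := Nat.card_Ico m0 m1
        have : (B.card : ℝ) ≤ (m1 : ℝ) - m0 := by
          rw [← Nat.cast_sub hm01]; exact_mod_cast hcc
        have hub : (m1 : ℝ) ≤ ((a:ℝ)+R)/d + 1 := le_of_lt (Nat.ceil_lt_add_one (by positivity))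
        have hlb : (a:ℝ)/d ≤ m0 := Nat.le_ceil _
        have heq : ((a:ℝ)+R)/d - (a:ℝ)/d = (R:ℝ)/d := by field_simp; ring
        rw [← hRd]
        linarith
      · -- wrap
        push_neg at hcase
        have hcaseR : (L:ℝ) < (a:ℝ) + R := by exact_mod_cast hcase
        set m0 := Nat.ceil ((a:ℝ)/d) with hm0
        set m2 := Nat.ceil (((a:ℝ)+R-L)/d) with hm2
        have hy0 : (0:ℝ) ≤ ((a:ℝ)+R-L)/d := by
          apply div_nonneg _ hd0.le; linarith
        have hsub1 : B1 ⊆ Finset.Ico m0 κ2 := by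
          intro k hkk
          obtain ⟨h1, -⟩ := hB1bound k hkk
          rw [hB1, Finset.mem_filter, Finset.mem_range] at hkk
          rw [Finset.mem_Ico]
          exact ⟨by rw [hm0, Nat.ceil_le]; exact h1, hkk.1⟩
        have hsub2 : B2 ⊆ Finset.range m2 := by
          intro k hkk
          rw [hB2, Finset.mem_filter] at hkk
          obtain ⟨-, h2⟩ := hkk
          have h3 : M k < a + R - L := by omega
          have h4 : d * k < ((a:ℝ) + R - L) := by
            have := (Nat.floor_lt (by positivity)).mp h3
            have hcast : ((a + R - L : ℕ) : ℝ) = (a:ℝ) + R - L := by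
              push_cast [Nat.cast_sub (le_of_lt hcase)]; ring
            rw [hcast] at this; exact this
          have h5 : (k : ℝ) < ((a:ℝ)+R-L)/d := by rw [lt_div_iff₀ hd0]; linarith [mul_comm d (k:ℝ)]
          rw [Finset.mem_range]
          have : (k:ℝ) < m2 := lt_of_lt_of_le h5 (Nat.le_ceil _)
          exact_mod_cast this
        have hm0κ : m0 ≤ κ2 := by
          rw [hm0, Nat.ceil_le, div_le_iff₀ hd0]
          have : (a : ℝ) < L := by exact_mod_cast ha
          rw [mul_comm]; linarith [hdκ]
        have hc1 : (B1.card : ℝ) ≤ (κ2 : ℝ) - (a:ℝ)/d := by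
          have hcc : B1.card ≤ κ2 - m0 := by
            calc B1.card ≤ (Finset.Ico m0 κ2).card := Finset.card_le_card hsub1
              _ = κ2 - m0 := Nat.card_Ico _ _
          have h6 : (B1.card : ℝ) ≤ (κ2:ℝ) - m0 := by
            rw [← Nat.cast_sub hm0κ]; exact_mod_cast hcc
          linarith [Nat.le_ceil ((a:ℝ)/d)]
        have hc2 : (B2.card : ℝ) ≤ ((a:ℝ)+R-L)/d + 1 := by
          have hcc : B2.card ≤ m2 := by
            calc B2.card ≤ (Finset.range m2).card := Finset.card_le_card hsub2
              _ = m2 := Finset.card_range _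
          have h7 : (m2 : ℝ) ≤ ((a:ℝ)+R-L)/d + 1 := le_of_lt (Nat.ceil_lt_add_one hy0)
          calc (B2.card : ℝ) ≤ (m2 : ℝ) := by exact_mod_cast hcc
            _ ≤ _ := h7
        have htot : (B.card : ℝ) ≤ (B1.card : ℝ) + B2.card := by
          have h8 := Finset.card_le_card hBsub
          have h9 := le_trans h8 (Finset.card_union_le B1 B2)
          exact_mod_cast h9
        have hLd : (L : ℝ)/d = κ2 := by rw [hd]; field_simp
        have halg : (κ2:ℝ) - (a:ℝ)/d + (((a:ℝ)+R-L)/d + 1) = (R:ℝ)/d + 1 := by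
          have h10 : ((a:ℝ)+R-L)/d = (a:ℝ)/d + (R:ℝ)/d - (L:ℝ)/d := by ring
          rw [h10, hLd]; ring
        rw [← hRd]
        linarith
    -- final assembly
    rw [hcard]
    have hfin : (N : ℝ) / L * R = (κ1:ℝ) * R + (R:ℝ) * κ2 / L := by
      rw [hNeq]; field_simp
    rw [hfin]
    linarith [hcardB, mul_comm (R:ℝ) (κ1:ℝ)]

theorem pseudo_periodic_count_bound (L N : ℕ) (hL : 0 < L) (hN : 0 < N)
    (x : ℕ → ℝ) (hx : ∀ i, x i = 0 ∨ x i = 1)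
    (i0 R : ℕ) (hRL : R ≤ L)
    (hsupp : ∀ i < L, (x i = 1 ↔ ∃ j < R, i = (i0 + j) % L)) :
    (⨆ s : ℕ, xcount L x (atilde L N) s) ≤ (N : ℝ) / L * R + 1 := by
  classical
  apply ciSup_le
  intro s
  rw [xcount]
  set c := L - s % L with hc
  set f : ℕ → ℝ := fun i => atilde L N ((i + c) % L) with hf
  have step1 : ∑ i ∈ range L, x i * f i = ∑ i ∈ (range L).filter (fun i => x i = 1), f i := by
    rw [Finset.sum_filter]
    apply Finset.sum_congr rfl
    intro i _
    rcases hx i with h | h <;> simp [h]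
  have hW0 : (range L).filter (fun i => x i = 1) = (range R).image (fun j => (i0 + j) % L) := by
    ext i
    simp only [Finset.mem_filter, Finset.mem_range, Finset.mem_image]
    constructor
    · rintro ⟨h1, h2⟩
      obtain ⟨j, hj, hje⟩ := (hsupp i h1).mp h2
      exact ⟨j, hj, hje.symm⟩
    · rintro ⟨j, hj, hje⟩
      have hiL : i < L := hje ▸ Nat.mod_lt _ hL
      exact ⟨hiL, (hsupp i hiL).mpr ⟨j, hj, hje.symm⟩⟩
  have hginj : Set.InjOn (fun j => (i0 + j) % L) (range R) := by
    intro j hj j' hj' h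
    simp only [Finset.coe_range, Set.mem_Iio] at hj hj'
    have : j ≡ j' [MOD L] := Nat.ModEq.add_left_cancel' i0 h
    exact this.eq_of_lt_of_lt (lt_of_lt_of_le hj hRL) (lt_of_lt_of_le hj' hRL)
  rw [step1, hW0, Finset.sum_image (fun j hj j' hj' h => hginj (by simpa using hj) (by simpa using hj') h)]
  set a := (i0 + c) % L with ha
  have hmod : ∀ j, ((i0 + j) % L + c) % L = (a + j) % L := by
    intro j
    rw [ha, Nat.mod_add_mod, Nat.mod_add_mod]
    congr 1
    omega
  calc ∑ j ∈ range R, f ((i0 + j) % L)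
      = ∑ j ∈ range R, atilde L N ((a + j) % L) := by
        apply Finset.sum_congr rfl
        intro j _
        rw [hf]
        simp only
        rw [hmod j]
    _ ≤ (N : ℝ) / L * R + 1 := window_bound L N R a hL hRL (Nat.mod_lt _ hL)
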